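/- Let C be a polygonal curve with vertices p_0, …, p_m and L(C) > 0. Then for every k = 0, …, m, the displacement of the k-th vertex under one additional respacing step satisfies ‖f(f(p_k)) − f(p_k)‖ ≤ k·(L(C) − L(f(C))), where f(f(p_k)) denotes the k-th vertex of f(f(C)). -/

import Mathlib

open Finset Filter

noncomputable section

/-- The length of the polygonal curve with vertices `p 0, …, p m`
(also the arclength distance from `p 0` to `p m` along the curve). -/
def polyLength {dim : ℕ} (p : ℕ → EuclideanSpace ℝ (Fin dim)) (m : ℕ) : ℝ :=
  ∑ i ∈ Finset.range m, ‖p (i + 1) - p i‖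

/-- `P` is the arclength-parameterized linear interpolation of the polygonal
curve with vertices `p 0, …, p m`:
`P ((1-t)·d_{k-1} + t·d_k) = (1-t)·p_{k-1} + t·p_k` for `t ∈ [0,1]`, `k = 1, …, m`,
where `d_k = polyLength p k` is the arclength up to vertex `k`. -/
def IsArcParam {dim : ℕ} (p : ℕ → EuclideanSpace ℝ (Fin dim)) (m : ℕ)
    (P : ℝ → EuclideanSpace ℝ (Fin dim)) : Prop :=
  ∀ k : ℕ, 1 ≤ k → k ≤ m → ∀ t : ℝ, 0 ≤ t → t ≤ 1 →
    P ((1 - t) * polyLength p (k - 1) + t * polyLength p k)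
      = (1 - t) • p (k - 1) + t • p k

/-- The polygonal curve with vertices `p 0, …, p m` is equilateral:
all consecutive interpoint distances agree. -/
def IsEquilateral {dim : ℕ} (p : ℕ → EuclideanSpace ℝ (Fin dim)) (m : ℕ) : Prop :=
  ∀ k l : ℕ, 1 ≤ k → k ≤ m → 1 ≤ l → l ≤ m →
    ‖p k - p (k - 1)‖ = ‖p l - p (l - 1)‖

/-- `q 0, …, q m` are the vertices of the arclength respacing `f(C)` of the
polygonal curve `C` with vertices `p 0, …, p m`:
`q k = P (k·L(C)/m)` where `P` is the arclength parameterization of `C`;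
by convention `f(C) := C` when `L(C) = 0`. -/
def Respaces {dim : ℕ} (m : ℕ) (p q : ℕ → EuclideanSpace ℝ (Fin dim)) : Prop :=
  (polyLength p m = 0 ∧ ∀ k ≤ m, q k = p k) ∨
  (0 < polyLength p m ∧ ∃ P : ℝ → EuclideanSpace ℝ (Fin dim), IsArcParam p m P ∧
    ∀ k ≤ m, q k = P ((k : ℝ) * polyLength p m / m))

lemma polyLength_nonneg {dim : ℕ} (p : ℕ → EuclideanSpace ℝ (Fin dim)) (m : ℕ) :
    0 ≤ polyLength p m :=
  Finset.sum_nonneg fun _ _ => norm_nonneg _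

lemma polyLength_mono {dim : ℕ} (p : ℕ → EuclideanSpace ℝ (Fin dim)) :
    Monotone (polyLength p) := fun a b hab =>
  Finset.sum_le_sum_of_subset_of_nonneg (Finset.range_subset_range.2 hab)
    (fun _ _ _ => norm_nonneg _)

lemma polyLength_succ {dim : ℕ} (p : ℕ → EuclideanSpace ℝ (Fin dim)) (k : ℕ) :
    polyLength p (k + 1) = polyLength p k + ‖p (k + 1) - p k‖ :=
  Finset.sum_range_succ _ _

lemma seg_lemma {dim m : ℕ} {p : ℕ → EuclideanSpace ℝ (Fin dim)}
    {P : ℝ → EuclideanSpace ℝ (Fin dim)} (hP : IsArcParam p m P)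
    {k : ℕ} (hk1 : 1 ≤ k) (hkm : k ≤ m) {a b : ℝ}
    (ha : polyLength p (k - 1) ≤ a) (hab : a ≤ b) (hb : b ≤ polyLength p k) :
    ‖P b - P a‖ ≤ b - a := by
  set d0 := polyLength p (k - 1) with hd0
  set d1 := polyLength p k with hd1
  have hkk : k - 1 + 1 = k := Nat.succ_pred_eq_of_pos hk1
  have hℓ : d1 = d0 + ‖p k - p (k - 1)‖ := by
    rw [hd1, hd0, ← hkk, polyLength_succ, hkk]
  by_cases h0 : d1 - d0 = 0
  · have hab' : a = b := le_antisymm hab (by linarith)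
    simp [hab', sub_nonneg, hab]
  · have hpos : 0 < d1 - d0 := lt_of_le_of_ne (by rw [hℓ]; simp [norm_nonneg]) (Ne.symm h0)
    have key : ∀ x : ℝ, d0 ≤ x → x ≤ d1 →
        P x = (1 - (x - d0) / (d1 - d0)) • p (k - 1) + ((x - d0) / (d1 - d0)) • p k := by
      intro x hx1 hx2
      have harg : (1 - (x - d0) / (d1 - d0)) * d0 + ((x - d0) / (d1 - d0)) * d1 = x := by
        field_simp
        ring
      have h := hP k hk1 hkm ((x - d0) / (d1 - d0)) (div_nonneg (by linarith) hpos.le)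
        ((div_le_one hpos).2 (by linarith))
      rw [show polyLength p (k - 1) = d0 from rfl, show polyLength p k = d1 from rfl,
        harg] at h
      exact h
    have hdiff : P b - P a = ((b - a) / (d1 - d0)) • (p k - p (k - 1)) := by
      rw [key a ha (le_trans hab hb), key b (le_trans ha hab) hb]
      have : (b - a) / (d1 - d0) = (b - d0) / (d1 - d0) - (a - d0) / (d1 - d0) := by
        rw [div_sub_div_same]; ring_nf
      rw [this]
      module
    rw [hdiff, norm_smul]
    have hn : ‖p k - p (k - 1)‖ = d1 - d0 := by rw [hℓ]; ring
    rw [hn, Real.norm_eq_abs, abs_of_nonneg (div_nonneg (by linarith) hpos.le),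
      div_mul_cancel₀ _ h0]

lemma lip_lemma {dim m : ℕ} {p : ℕ → EuclideanSpace ℝ (Fin dim)}
    {P : ℝ → EuclideanSpace ℝ (Fin dim)} (hP : IsArcParam p m P) :
    ∀ k ≤ m, ∀ a b : ℝ, 0 ≤ a → a ≤ b → b ≤ polyLength p k → ‖P b - P a‖ ≤ b - a := by
  intro k
  induction k with
  | zero =>
    intro _ a b ha hab hb
    have hb0 : b ≤ 0 := by simpa [polyLength] using hb
    have : a = b := le_antisymm hab (by linarith)
    simp [this, sub_nonneg, hab]
  | succ n ih =>
    intro hkm a b ha hab hb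
    by_cases hbn : b ≤ polyLength p n
    · exact ih (Nat.le_of_succ_le hkm) a b ha hab hbn
    · push_neg at hbn
      by_cases han : polyLength p n ≤ a
      · have := seg_lemma hP (Nat.succ_le_succ (Nat.zero_le n)) hkm
          (a := a) (b := b) (by simpa using han) hab (by simpa using hb)
        exact this
      · push_neg at han
        have h1 := ih (by omega) a (polyLength p n) ha han.le le_rfl
        have h2 := seg_lemma hP (Nat.succ_le_succ (Nat.zero_le n)) hkm
          (a := polyLength p n) (b := b) (by simp) hbn.le (by simpa using hb)
        calc ‖P b - P a‖ ≤ ‖P b - P (polyLength p n)‖ + ‖P (polyLength p n) - P a‖ :=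
              norm_sub_le_norm_sub_add_norm_sub _ _ _
          _ ≤ (b - polyLength p n) + (polyLength p n - a) := add_le_add h2 h1
          _ = b - a := by ring

set_option maxHeartbeats 1000000

/-- The displacement of the `k`-th vertex under one additional respacing step
is at most `k·(L(C) - L(f(C)))`. -/
theorem stmt13 {dim m : ℕ} (hm : 1 ≤ m) (p : ℕ → EuclideanSpace ℝ (Fin dim))
    (hL : 0 < polyLength p m)
    (P : ℝ → EuclideanSpace ℝ (Fin dim)) (hP : IsArcParam p m P)
    (q : ℕ → EuclideanSpace ℝ (Fin dim))
    (hq : ∀ k ≤ m, q k = P ((k : ℝ) * polyLength p m / m))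
    (r : ℕ → EuclideanSpace ℝ (Fin dim))
    (hr : Respaces m q r) :
    ∀ k ≤ m, ‖r k - q k‖ ≤ (k : ℝ) * (polyLength p m - polyLength q m) := by
  set L := polyLength p m with hLdef
  set L' := polyLength q m with hL'def
  have hM0 : (0 : ℝ) < (m : ℝ) := by exact_mod_cast Nat.pos_of_ne_zero (by omega)
  have hMne : (m : ℝ) ≠ 0 := ne_of_gt hM0
  -- chord bound
  have hchord : ∀ i, i < m → ‖q (i + 1) - q i‖ ≤ L / m := by
    intro i hi
    rw [hq i (le_of_lt hi), hq (i + 1) hi]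
    have hcast : ((i + 1 : ℕ) : ℝ) ≤ (m : ℝ) := by exact_mod_cast hi
    have hb : ((i + 1 : ℕ) : ℝ) * L / m ≤ L := by
      rw [div_le_iff₀ hM0]
      nlinarith [hcast, hL.le]
    have hab : (i : ℝ) * L / m ≤ ((i + 1 : ℕ) : ℝ) * L / m :=
      (div_le_div_iff_of_pos_right hM0).2 (mul_le_mul_of_nonneg_right (by push_cast; linarith) hL.le)
    have := lip_lemma hP m le_rfl ((i : ℝ) * L / m) (((i + 1 : ℕ) : ℝ) * L / m)
      (by positivity) hab hb
    calc ‖P (((i + 1 : ℕ) : ℝ) * L / m) - P ((i : ℝ) * L / m)‖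
        ≤ ((i + 1 : ℕ) : ℝ) * L / m - (i : ℝ) * L / m := this
      _ = L / m := by push_cast; ring
  -- partial length bounds
  have hsum_le : ∀ k ≤ m, polyLength q k ≤ (k : ℝ) * (L / m) := by
    intro k hk
    calc polyLength q k ≤ ∑ _i ∈ Finset.range k, L / m :=
          Finset.sum_le_sum fun i hi =>
            hchord i (lt_of_lt_of_le (Finset.mem_range.1 hi) hk)
      _ = (k : ℝ) * (L / m) := by
          rw [Finset.sum_const, Finset.card_range, nsmul_eq_mul]
  have htail : ∀ k ≤ m, L' - polyLength q k ≤ ((m : ℝ) - (k : ℝ)) * (L / m) := by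
    intro k hk
    have hsplit : L' - polyLength q k = ∑ i ∈ Finset.Ico k m, ‖q (i + 1) - q i‖ := by
      rw [hL'def]
      unfold polyLength
      rw [Finset.range_eq_Ico, Finset.range_eq_Ico,
        ← Finset.sum_Ico_consecutive _ (Nat.zero_le k) hk]
      ring
    rw [hsplit]
    calc ∑ i ∈ Finset.Ico k m, ‖q (i + 1) - q i‖
        ≤ ∑ _i ∈ Finset.Ico k m, L / m :=
          Finset.sum_le_sum fun i hi => hchord i (Finset.mem_Ico.1 hi).2
      _ = ((m : ℝ) - (k : ℝ)) * (L / m) := by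
          rw [Finset.sum_const, Nat.card_Ico, nsmul_eq_mul, Nat.cast_sub hk]
  have hL'le : L' ≤ L := by
    have := hsum_le m le_rfl
    rw [← hL'def] at this
    calc L' ≤ (m : ℝ) * (L / m) := this
      _ = L := by field_simp
  have hL'0 : 0 ≤ L' := polyLength_nonneg q m
  -- main proof
  intro k hk
  rcases hr with ⟨hq0, hrq⟩ | ⟨hL'pos, Q, hQ, hrQ⟩
  · rw [hrq k hk, sub_self, norm_zero]
    have hz : L' = 0 := hq0
    rw [hz, sub_zero]
    positivity
  · rw [← hL'def] at hL'pos hrQ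
    have hqQ : ∀ j ≤ m, q j = Q (polyLength q j) := by
      intro j hj
      match j with
      | 0 =>
        have h := hQ 1 le_rfl hm 0 le_rfl zero_le_one
        simpa [polyLength] using h.symm
      | Nat.succ n =>
        have h := hQ (n + 1) (Nat.succ_le_succ (Nat.zero_le n)) hj 1 zero_le_one le_rfl
        simpa using h.symm
    rcases Nat.eq_zero_or_pos k with hk0 | hk1
    · subst hk0
      rw [hrQ 0 (Nat.zero_le m), hqQ 0 (Nat.zero_le m)]
      simp [polyLength]
    · -- notation
      set K := (k : ℝ) with hK
      set M := (m : ℝ) with hM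
      set dk := polyLength q k with hdk
      set x := K * L' / m with hx
      have hK1 : (1 : ℝ) ≤ K := by rw [hK]; exact_mod_cast hk1
      have hKM : K ≤ M := by rw [hK, hM]; exact_mod_cast hk
      have hM1 : (1 : ℝ) ≤ M := by rw [hM]; exact_mod_cast hm
      have hdk0 : 0 ≤ dk := polyLength_nonneg q k
      have hdkL' : dk ≤ L' := polyLength_mono q hk
      have hx0 : 0 ≤ x := by positivity
      have hxL' : x ≤ L' := by
        rw [hx]
        calc K * L' / m ≤ M * L' / m :=
              (div_le_div_iff_of_pos_right hM0).2 (mul_le_mul_of_nonneg_right hKM hL'0)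
          _ = L' := by field_simp; exact hM
      have hMx : M * x = K * L' := by rw [hx]; field_simp; exact hM
      have hMdk : M * dk ≤ K * L := by
        have := hsum_le k hk
        rw [← hdk] at this
        calc M * dk ≤ M * (K * (L / m)) := by
              exact mul_le_mul_of_nonneg_left this hM0.le
          _ = K * L := by rw [hM]; field_simp
      have hMtail : M * (L' - dk) ≤ (M - K) * L := by
        have := htail k hk
        rw [← hdk] at this
        calc M * (L' - dk) ≤ M * ((M - K) * (L / m)) := by
              apply mul_le_mul_of_nonneg_left this hM0.le
          _ = (M - K) * L := by rw [hM]; field_simp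
      have hrk : r k = Q x := hrQ k hk
      have hLL' : L' ≤ L := hL'le
      have hqk : q k = Q dk := hqQ k hk
      rw [hrk, hqk]
      have hlip1 := fun (h : x ≤ dk) => lip_lemma hQ m le_rfl x dk hx0 h hdkL'
      have hlip2 := fun (h : dk ≤ x) => lip_lemma hQ m le_rfl dk x hdk0 h hxL'
      clear_value K M dk x L L'
      rcases le_total x dk with hcase | hcase
      · -- dk ≥ x
        have hlip := hlip1 hcase
        rw [norm_sub_rev]
        have hprod : 0 ≤ (M - 1) * (dk - x) :=
          mul_nonneg (by linarith) (by linarith)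
        have hfin : dk - x ≤ K * (L - L') := by nlinarith [hMdk, hMx, hprod]
        linarith [hlip, hfin]
      · -- x ≥ dk
        have hlip := hlip2 hcase
        have e1 : M * (x - dk) ≤ (M - K) * (L - L') := by nlinarith [hMtail, hMx]
        have e2 : (M - K) * (L - L') ≤ M * (K * (L - L')) := by
          have h1 : 0 ≤ M * K - M + K := by nlinarith [mul_nonneg hM0.le (sub_nonneg.2 hK1)]
          nlinarith [mul_nonneg (sub_nonneg.2 hL'le) h1]
        have hfin : x - dk ≤ K * (L - L') :=
          le_of_mul_le_mul_left (by linarith) hM0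
        linarith [hlip, hfin]
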